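/- If Tr(x^d + a x) = 0 for all x ∈ GF(2^m), where d is coprime to 2^m - 1, then d is congruent to some power of 2 modulo 2^m - 1. -/

import Mathlib

open Finset

/-- `(-1)^{Tr(y)}` as an integer, where `Tr` is the absolute trace to `GF(2)`. -/
noncomputable def sgn (F : Type*) [Field F] [Fintype F] [Algebra (ZMod 2) F] (y : F) : ℤ :=
  if Algebra.trace (ZMod 2) F y = 0 then 1 else -1

/-- The Walsh transform `W_d(a) = Σ_{x ∈ GF(2^m)} (-1)^{Tr(x^d + a x)}`. -/
noncomputable def Wd (F : Type*) [Field F] [Fintype F] [Algebra (ZMod 2) F]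
    (d : ℕ) (a : F) : ℤ :=
  ∑ x : F, sgn F (x ^ d + a * x)

open Polynomial

/-- Powers of two below `2^m` are distinct modulo `2^m - 1`. -/
lemma two_pow_modEq_inj {m i j : ℕ} (hi : i < m) (hj : j < m)
    (h : 2 ^ i ≡ 2 ^ j [MOD 2 ^ m - 1]) : i = j := by
  wlog hle : i ≤ j generalizing i j
  · exact (this hj hi h.symm (le_of_not_ge hle)).symm
  rcases eq_or_lt_of_le hle with rfl | hlt
  · rfl
  exfalso
  have hdvd : (2 ^ m - 1) ∣ 2 ^ j - 2 ^ i :=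
    (Nat.modEq_iff_dvd' (Nat.pow_le_pow_right (by norm_num) hle)).mp h
  have hfac : 2 ^ j - 2 ^ i = 2 ^ i * (2 ^ (j - i) - 1) := by
    rw [Nat.mul_sub, mul_one, ← pow_add, Nat.add_sub_cancel' hle]
  have hodd : Odd (2 ^ m - 1) := by
    refine Nat.Even.sub_odd Nat.one_le_two_pow ?_ odd_one
    exact (Nat.even_pow' (by omega)).mpr even_two
  have hcop : Nat.Coprime (2 ^ m - 1) (2 ^ i) :=
    Nat.Coprime.pow_right i hodd.coprime_two_right
  have hdvd2 : (2 ^ m - 1) ∣ 2 ^ (j - i) - 1 := by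
    refine hcop.dvd_of_dvd_mul_left ?_
    rwa [hfac] at hdvd
  have h1 : 0 < 2 ^ (j - i) - 1 := by
    have h2 : (2:ℕ) ^ 1 ≤ 2 ^ (j - i) := Nat.pow_le_pow_right (by norm_num) (by omega)
    simp at h2
    omega
  have h2 : 2 ^ (j - i) < 2 ^ m := Nat.pow_lt_pow_right (by norm_num) (by omega)
  have := Nat.le_of_dvd h1 hdvd2
  omega

/-- if Tr(x^d + a x) = 0 for all x, then d is a power of 2
modulo 2^m - 1. -/
theorem stmt_2 {m : ℕ} (hm : 1 ≤ m) (F : Type*) [Field F] [Fintype F]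
    [Algebra (ZMod 2) F] (hF : Fintype.card F = 2 ^ m)
    (d : ℕ) (hd : Nat.Coprime d (2 ^ m - 1)) (a : F)
    (h : ∀ x : F, Algebra.trace (ZMod 2) F (x ^ d + a * x) = 0) :
    ∃ k, d ≡ 2 ^ k [MOD 2 ^ m - 1] := by
  classical
  rcases Nat.lt_or_ge m 2 with hm1 | hm2
  · have : m = 1 := by omega
    subst this
    exact ⟨0, Nat.modEq_one⟩
  have hn3 : 3 ≤ 2 ^ m - 1 := by
    have : (2:ℕ) ^ 2 ≤ 2 ^ m := Nat.pow_le_pow_right (by norm_num) hm2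
    omega
  haveI : CharP F 2 := charP_of_injective_algebraMap (algebraMap (ZMod 2) F).injective 2
  haveI : ExpChar F 2 := ExpChar.prime Nat.prime_two
  haveI : Module.Finite (ZMod 2) F := Module.Finite.of_finite
  have hsq : ∀ c : ZMod 2, c ^ 2 = c := by decide
  -- the Frobenius as an algebra automorphism
  let φ : F ≃ₐ[ZMod 2] F :=
    { frobeniusEquiv F 2 with
      commutes' := fun c => by
        show frobeniusEquiv F 2 (algebraMap (ZMod 2) F c) = algebraMap (ZMod 2) F c
        rw [frobeniusEquiv_def, ← map_pow, hsq] }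
  have hφ : ∀ x : F, φ x = x ^ 2 := fun x => rfl
  have hφpow : ∀ (i : ℕ) (x : F), (φ ^ i) x = x ^ 2 ^ i := by
    intro i
    induction i with
    | zero => intro x; simp
    | succ i ih =>
      intro x
      rw [pow_succ, AlgEquiv.mul_apply, hφ, ih, ← pow_mul, pow_succ']
  have hfinrank : Module.finrank (ZMod 2) F = m := by
    have hc := Module.card_eq_pow_finrank (K := ZMod 2) (V := F)
    rw [ZMod.card, hF] at hc
    exact (Nat.pow_right_injective le_rfl hc.symm)
  have hcard_aut : Fintype.card (F ≃ₐ[ZMod 2] F) = m := by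
    rw [← Nat.card_eq_fintype_card, IsGalois.card_aut_eq_finrank, hfinrank]
  -- the powers of Frobenius enumerate the Galois group
  let g : Fin m → (F ≃ₐ[ZMod 2] F) := fun i => φ ^ (i : ℕ)
  have hginj : Function.Injective g := by
    intro i j hij
    obtain ⟨u, hu⟩ := IsCyclic.exists_generator (α := Fˣ)
    have horder : orderOf u = 2 ^ m - 1 := by
      rw [orderOf_eq_card_of_forall_mem_zpowers hu, Nat.card_eq_fintype_card, Fintype.card_units, hF]
    have h1 : (u : F) ^ (2 ^ (i : ℕ)) = (u : F) ^ (2 ^ (j : ℕ)) := by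
      rw [← hφpow, ← hφpow]
      show g i _ = g j _
      rw [hij]
    have h2 : u ^ (2 ^ (i : ℕ)) = u ^ (2 ^ (j : ℕ)) := Units.ext (by push_cast; exact h1)
    have hmod : 2 ^ (i : ℕ) ≡ 2 ^ (j : ℕ) [MOD 2 ^ m - 1] := by
      rw [← horder]; exact pow_eq_pow_iff_modEq.mp h2
    exact Fin.ext (two_pow_modEq_inj i.2 j.2 hmod)
  have hgbij : Function.Bijective g :=
    (Fintype.bijective_iff_injective_and_card g).mpr ⟨hginj, by simp [hcard_aut]⟩
  -- the trace as a sum of Frobenius powers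
  have htr : ∀ y : F,
      algebraMap (ZMod 2) F (Algebra.trace (ZMod 2) F y) = ∑ i ∈ range m, y ^ 2 ^ i := by
    intro y
    rw [trace_eq_sum_automorphisms,
      ← Fintype.sum_bijective g hgbij (fun i => (φ ^ (i : ℕ)) y) (fun σ => σ y) (fun i => rfl)]
    simp_rw [hφpow]
    exact Fin.sum_univ_eq_sum_range (fun i => y ^ 2 ^ i) m
  -- expand the hypothesis
  have key : ∀ x : F,
      (∑ i ∈ range m, x ^ (d * 2 ^ i)) + ∑ i ∈ range m, a ^ 2 ^ i * x ^ 2 ^ i = 0 := by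
    intro x
    have h0 := htr (x ^ d + a * x)
    rw [h x, map_zero] at h0
    have hterm : ∀ i ∈ range m,
        (x ^ d + a * x) ^ 2 ^ i = x ^ (d * 2 ^ i) + a ^ 2 ^ i * x ^ 2 ^ i := by
      intro i _
      rw [add_pow_char_pow, mul_pow, pow_mul]
    rw [Finset.sum_congr rfl hterm, Finset.sum_add_distrib] at h0
    exact h0.symm
  have hd0 : d ≠ 0 := by
    rintro rfl
    rw [Nat.coprime_zero_left] at hd
    omega
  have hodd : Odd (2 ^ m - 1) := by
    refine Nat.Even.sub_odd Nat.one_le_two_pow ?_ odd_one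
    exact (Nat.even_pow' (by omega)).mpr even_two
  set n := 2 ^ m - 1 with hn
  have hrne : ∀ i : ℕ, (d * 2 ^ i) % n ≠ 0 := by
    intro i hcon
    have hdvd : n ∣ d * 2 ^ i := Nat.dvd_of_mod_eq_zero hcon
    have hcop : Nat.Coprime n (d * 2 ^ i) :=
      Nat.Coprime.mul_right hd.symm (Nat.Coprime.pow_right i hodd.coprime_two_right)
    have := hcop.eq_one_of_dvd hdvd
    omega
  have hpowmod : ∀ (x : F) (e : ℕ), e ≠ 0 → e % n ≠ 0 → x ^ e = x ^ (e % n) := by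
    intro x e he hem
    rcases eq_or_ne x 0 with rfl | hx
    · rw [zero_pow he, zero_pow hem]
    · conv_lhs => rw [← Nat.div_add_mod e n]
      have h1 : x ^ n = 1 := by
        rw [hn, ← hF]; exact FiniteField.pow_card_sub_one_eq_one x hx
      rw [pow_add, pow_mul, h1, one_pow, one_mul]
  set r : ℕ → ℕ := fun i => (d * 2 ^ i) % n with hr
  have hkey2 : ∀ x : F, (∑ i ∈ range m, x ^ r i) + ∑ i ∈ range m, a ^ 2 ^ i * x ^ 2 ^ i = 0 := by
    intro x
    rw [← key x]
    congr 1
    refine Finset.sum_congr rfl fun i _ => ?_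
    exact (hpowmod x _ (Nat.mul_ne_zero hd0 (pow_ne_zero i two_ne_zero)) (hrne i)).symm
  -- the corresponding polynomial vanishes identically, hence is zero
  set P : F[X] := (∑ i ∈ range m, X ^ r i) + ∑ i ∈ range m, C (a ^ 2 ^ i) * X ^ 2 ^ i with hP
  have hPeval : ∀ x : F, P.eval x = 0 := by
    intro x
    rw [hP, eval_add, eval_finset_sum, eval_finset_sum]
    simp only [eval_pow, eval_X, eval_mul, eval_C]
    exact hkey2 x
  have hnpos : 0 < n := by omega
  have hr_lt : ∀ i, r i < n := fun i => Nat.mod_lt _ hnpos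
  have hPdeg : P.natDegree < Fintype.card F := by
    rw [hF, hP]
    have hb1 : (∑ i ∈ range m, (X : F[X]) ^ r i).natDegree ≤ 2 ^ m - 2 := by
      refine natDegree_sum_le_of_forall_le _ _ fun i _ => ?_
      rw [natDegree_X_pow]
      have := hr_lt i
      omega
    have hb2 : (∑ i ∈ range m, C (a ^ 2 ^ i) * (X : F[X]) ^ 2 ^ i).natDegree ≤ 2 ^ m - 2 := by
      refine natDegree_sum_le_of_forall_le _ _ fun i hi => ?_
      refine (natDegree_C_mul_X_pow_le _ _).trans ?_
      have hi' : i ≤ m - 1 := by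
        have := mem_range.mp hi; omega
      have hle1 : (2:ℕ) ^ i ≤ 2 ^ (m - 1) := Nat.pow_le_pow_right (by norm_num) hi'
      have h3 : (2:ℕ) ^ 1 ≤ 2 ^ (m - 1) := Nat.pow_le_pow_right (by norm_num) (by omega)
      have h2m : 2 ^ (m - 1) * 2 = 2 ^ m := by
        rw [← pow_succ]
        congr 1
        omega
      simp at h3
      omega
    have hadd := natDegree_add_le (∑ i ∈ range m, (X : F[X]) ^ r i)
      (∑ i ∈ range m, C (a ^ 2 ^ i) * (X : F[X]) ^ 2 ^ i)
    have h4 : (4:ℕ) ≤ 2 ^ m := by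
      calc (4:ℕ) = 2 ^ 2 := rfl
      _ ≤ 2 ^ m := Nat.pow_le_pow_right (by norm_num) hm2
    omega
  have hP0 : P = 0 :=
    Polynomial.eq_zero_of_natDegree_lt_card_of_eval_eq_zero P Function.injective_id
      (fun x => hPeval x) (by simpa using hPdeg)
  -- extract the coefficient at r 0
  by_contra hcon
  push_neg at hcon
  have hne : ∀ i ∈ range m, r 0 ≠ 2 ^ i := by
    intro i hi heq
    refine hcon i ?_
    have h1 : d ≡ r 0 [MOD n] := by
      show d % n = r 0 % n
      have : r 0 = d % n := by rw [hr]; simp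
      rw [this, Nat.mod_mod_of_dvd _ dvd_rfl]
    have h2 : (2:ℕ) ^ i < n := by
      have hle1 : (2:ℕ) ^ i ≤ 2 ^ (m - 1) :=
        Nat.pow_le_pow_right (by norm_num) (by have := mem_range.mp hi; omega)
      have h3 : (2:ℕ) ^ 1 ≤ 2 ^ (m - 1) := Nat.pow_le_pow_right (by norm_num) (by omega)
      have h2m : 2 ^ (m - 1) * 2 = 2 ^ m := by
        rw [← pow_succ]
        congr 1
        omega
      simp at h3
      omega
    calc d ≡ r 0 [MOD n] := h1
    _ = 2 ^ i := heq
  have hrinj0 : ∀ i ∈ range m, r 0 = r i → i = 0 := by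
    intro i hi heq
    have hmodeq : d * 2 ^ 0 ≡ d * 2 ^ i [MOD n] := by
      show (d * 2 ^ 0) % n = (d * 2 ^ i) % n
      rw [hr] at heq
      simpa using heq
    have hcan : 2 ^ 0 ≡ 2 ^ i [MOD n] :=
      Nat.ModEq.cancel_left_of_coprime hd.symm hmodeq
    exact (two_pow_modEq_inj (by omega) (mem_range.mp hi) hcan).symm
  have hcoeff := congrArg (fun Q : F[X] => Q.coeff (r 0)) hP0
  simp only [hP, coeff_add, finset_sum_coeff, coeff_X_pow, coeff_C_mul, coeff_zero] at hcoeff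
  rw [Finset.sum_eq_single 0
      (fun i hi hne0 => if_neg fun heq => hne0 (hrinj0 i hi heq))
      (fun habs => absurd (mem_range.mpr (by omega)) habs)] at hcoeff
  rw [if_pos rfl] at hcoeff
  have hzero : ∀ i ∈ range m, a ^ 2 ^ i * (if r 0 = 2 ^ i then (1:F) else 0) = 0 := by
    intro i hi
    rw [if_neg (hne i hi), mul_zero]
  rw [Finset.sum_congr rfl hzero, Finset.sum_const_zero] at hcoeff
  simp at hcoeff
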